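/- Let n, m ≥ 1, let M ∈ ℝ^{n×n}, let ṽ ∈ ℝⁿ be nonzero, λ̃ ∈ ℝ, let f₁,…,f_m ∈ ℝ and weights w₁,…,w_m ≥ 0 with Σᵢ₌₁ᵐ |fᵢ| wᵢ > 0, set r = Mṽ − λ̃ṽ and assume r ≠ 0, and define γ = sqrt(2 − (rᵀṽ)²/(‖r‖²‖ṽ‖²)) (so γ = sqrt(1 + sin²ϑ) with ϑ the angle between r and ṽ). Consider the set T_sym^F = { |ε| : ε ∈ ℝ and there exist symmetric E₁,…,E_m ∈ ℝ^{n×n} (Eᵢᵀ = Eᵢ) with ‖Eᵢ‖_F ≤ wᵢ for all i such that (M + ε Σᵢ₌₁ᵐ fᵢ Eᵢ) ṽ = λ̃ ṽ }. Then the least element of T_sym^F equals γ · ‖r‖ / ((Σᵢ₌₁ᵐ |fᵢ| wᵢ) ‖ṽ‖): it is a lower bound for T_sym^F and it is attained, e.g. by Eᵢ = (sign(fᵢ) wᵢ / (γ‖r‖‖ṽ‖)) · ((rᵀṽ/‖ṽ‖²) ṽṽᵀ − ṽrᵀ − rṽᵀ). -/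

import Mathlib

open Matrix

/-- Euclidean norm of a vector in `ℝⁿ`. -/
noncomputable def e2norm {n : ℕ} (v : Fin n → ℝ) : ℝ := Real.sqrt (∑ i, v i ^ 2)

/-- Frobenius norm of a real matrix. -/
noncomputable def frobNorm {n m : ℕ} (M : Matrix (Fin n) (Fin m) ℝ) : ℝ :=
  Real.sqrt (∑ i, ∑ j, M i j ^ 2)

/-- Spectral norm: the supremum of `‖M x‖` over Euclidean-unit vectors `x`. -/
noncomputable def specNorm {n m : ℕ} (M : Matrix (Fin n) (Fin m) ℝ) : ℝ :=
  sSup ((fun x => e2norm (M.mulVec x)) '' {x : Fin m → ℝ | e2norm x = 1})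

lemma mul_sign_eq_abs (x : ℝ) : x * Real.sign x = |x| := by
  rcases lt_trichotomy x 0 with h|h|h
  · rw [Real.sign_of_neg h, abs_of_neg h]; ring
  · simp [h]
  · rw [Real.sign_of_pos h, abs_of_pos h]; ring

lemma abs_sign_le_one (x : ℝ) : |Real.sign x| ≤ 1 := by
  rcases lt_trichotomy x 0 with h|h|h
  · rw [Real.sign_of_neg h]; norm_num
  · simp [h]
  · rw [Real.sign_of_pos h]; norm_num

lemma e2norm_nonneg {n : ℕ} (v : Fin n → ℝ) : 0 ≤ e2norm v := Real.sqrt_nonneg _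

lemma e2norm_sq {n : ℕ} (v : Fin n → ℝ) : e2norm v ^ 2 = v ⬝ᵥ v := by
  rw [e2norm, Real.sq_sqrt (Finset.sum_nonneg fun i _ => sq_nonneg _)]
  exact Finset.sum_congr rfl fun i _ => (sq (v i)).symm ▸ by ring

lemma dot_self_pos {n : ℕ} {v : Fin n → ℝ} (hv : v ≠ 0) : 0 < v ⬝ᵥ v := by
  obtain ⟨i, hi⟩ : ∃ i, v i ≠ 0 := by
    by_contra h; push_neg at h; exact hv (funext h)
  exact Finset.sum_pos' (fun j _ => mul_self_nonneg _)
    ⟨i, Finset.mem_univ i, mul_self_pos.mpr hi⟩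

lemma e2norm_pos {n : ℕ} {v : Fin n → ℝ} (hv : v ≠ 0) : 0 < e2norm v := by
  have := dot_self_pos hv
  rw [← e2norm_sq] at this
  nlinarith [e2norm_nonneg v]

lemma e2norm_eq_sqrt_dot {n : ℕ} (v : Fin n → ℝ) : e2norm v = Real.sqrt (v ⬝ᵥ v) := by
  rw [← e2norm_sq, Real.sqrt_sq (e2norm_nonneg v)]

noncomputable def fvecL (n m : ℕ) : Matrix (Fin n) (Fin m) ℝ →ₗ[ℝ] EuclideanSpace ℝ (Fin n × Fin m) where
  toFun M := WithLp.toLp 2 (fun p : Fin n × Fin m => M p.1 p.2)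
  map_add' _ _ := rfl
  map_smul' _ _ := rfl

lemma frobNorm_eq {n m : ℕ} (M : Matrix (Fin n) (Fin m) ℝ) :
    frobNorm M = ‖fvecL n m M‖ := by
  rw [EuclideanSpace.norm_eq, frobNorm]
  congr 1
  rw [Fintype.sum_prod_type]
  simp only [fvecL, LinearMap.coe_mk, AddHom.coe_mk, WithLp.ofLp_toLp, Real.norm_eq_abs, sq_abs]
  rfl

lemma frobNorm_smul {n m : ℕ} (c : ℝ) (M : Matrix (Fin n) (Fin m) ℝ) :
    frobNorm (c • M) = |c| * frobNorm M := by
  rw [frobNorm_eq, frobNorm_eq, _root_.map_smul, norm_smul, Real.norm_eq_abs]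

lemma frobNorm_sq {n m : ℕ} (M : Matrix (Fin n) (Fin m) ℝ) :
    frobNorm M ^ 2 = ∑ i, ∑ j, M i j ^ 2 :=
  Real.sq_sqrt (Finset.sum_nonneg fun i _ => Finset.sum_nonneg fun j _ => sq_nonneg _)

lemma frobNorm_nonneg {n m : ℕ} (M : Matrix (Fin n) (Fin m) ℝ) : 0 ≤ frobNorm M :=
  Real.sqrt_nonneg _

lemma frob_sum_le {n m k : ℕ} (f w : Fin k → ℝ) (E : Fin k → Matrix (Fin n) (Fin m) ℝ)
    (hE : ∀ i, frobNorm (E i) ≤ w i) :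
    frobNorm (∑ i, f i • E i) ≤ ∑ i, |f i| * w i := by
  rw [frobNorm_eq, map_sum]
  refine (norm_sum_le _ _).trans (Finset.sum_le_sum fun i _ => ?_)
  rw [_root_.map_smul, norm_smul, Real.norm_eq_abs]
  exact mul_le_mul_of_nonneg_left (by rw [← frobNorm_eq]; exact hE i) (abs_nonneg _)

lemma sum_prod_form {n : ℕ} (x y z w : Fin n → ℝ) :
    ∑ i, ∑ j, (x i * y j) * (z i * w j) = (∑ i, x i * z i) * (∑ j, y j * w j) := by
  rw [Finset.sum_mul_sum]
  exact Finset.sum_congr rfl fun i _ => Finset.sum_congr rfl fun j _ => by ring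

lemma sum_mat_form {n : ℕ} (Δ : Matrix (Fin n) (Fin n) ℝ) (x y : Fin n → ℝ) :
    ∑ i, ∑ j, Δ i j * (x i * y j) = ∑ i, x i * (Δ.mulVec y) i := by
  refine Finset.sum_congr rfl fun i _ => ?_
  rw [Matrix.mulVec, dotProduct, Finset.mul_sum]
  exact Finset.sum_congr rfl fun j _ => by ring

lemma key_ineq {n : ℕ} (Δ : Matrix (Fin n) (Fin n) ℝ) (hΔ : Δᵀ = Δ) (v : Fin n → ℝ)
    (hnv2 : 0 < v ⬝ᵥ v) :
    2 * ((Δ.mulVec v) ⬝ᵥ (Δ.mulVec v)) * (v ⬝ᵥ v) - ((Δ.mulVec v) ⬝ᵥ v) ^ 2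
      ≤ (∑ i, ∑ j, Δ i j ^ 2) * (v ⬝ᵥ v) ^ 2 := by
  set a := Δ.mulVec v with ha
  set nv2 := v ⬝ᵥ v with hnv
  set na2 := a ⬝ᵥ a with hna
  set α := a ⬝ᵥ v with halpha
  set P := ∑ i, ∑ j, Δ i j ^ 2 with hP
  set C : Matrix (Fin n) (Fin n) ℝ :=
    fun i j => nv2^2 * Δ i j - nv2*(a i * v j) - nv2*(v i * a j) + α*(v i * v j) with hCdef
  have hva : v ⬝ᵥ a = α := dotProduct_comm v a
  have h2 : ∑ i, ∑ j, Δ i j * (a i * v j) = na2 := by rw [sum_mat_form]; rfl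
  have h3 : ∑ i, ∑ j, Δ i j * (v i * a j) = na2 := by
    rw [sum_mat_form]
    show v ⬝ᵥ Δ.mulVec a = na2
    rw [Matrix.dotProduct_mulVec, ← Matrix.mulVec_transpose, hΔ]
  have h4 : ∑ i, ∑ j, Δ i j * (v i * v j) = α := by
    rw [sum_mat_form]; exact hva
  have hC : ∑ i, ∑ j, C i j ^ 2 = nv2^2 * (nv2^2 * P - (2*nv2*na2 - α^2)) := by
    have expand : ∀ i j, C i j ^ 2 =
        nv2^4 * Δ i j ^ 2 - 2*nv2^3*(Δ i j*(a i*v j)) - 2*nv2^3*(Δ i j*(v i*a j))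
        + 2*nv2^2*α*(Δ i j*(v i*v j)) + nv2^2*((a i*v j)*(a i*v j))
        + 2*nv2^2*((a i*v j)*(v i*a j)) - 2*nv2*α*((a i*v j)*(v i*v j))
        + nv2^2*((v i*a j)*(v i*a j)) - 2*nv2*α*((v i*a j)*(v i*v j))
        + α^2*((v i*v j)*(v i*v j)) := fun i j => by simp only [hCdef]; ring
    simp only [expand]
    simp only [Finset.sum_add_distrib, Finset.sum_sub_distrib, ← Finset.mul_sum]
    rw [h2, h3, h4, sum_prod_form a v a v, sum_prod_form a v v a, sum_prod_form a v v v,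
      sum_prod_form v a v a, sum_prod_form v a v v, sum_prod_form v v v v]
    have e1 : ∑ i, a i * a i = na2 := rfl
    have e2 : ∑ i, a i * v i = α := rfl
    have e3 : ∑ i, v i * a i = α := hva
    have e4 : ∑ i, v i * v i = nv2 := rfl
    rw [e1, e2, e3, e4]
    ring
  have hCpos : 0 ≤ ∑ i, ∑ j, C i j ^ 2 :=
    Finset.sum_nonneg fun i _ => Finset.sum_nonneg fun j _ => sq_nonneg _
  rw [hC] at hCpos
  nlinarith [mul_pos hnv2 hnv2, hCpos, hnv2]

lemma Afrob {n : ℕ} (v r : Fin n → ℝ) :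
    ∑ i, ∑ j, ((r ⬝ᵥ v)*(v i*v j) - (v ⬝ᵥ v)*(v i*r j) - (v ⬝ᵥ v)*(r i*v j))^2
      = (v ⬝ᵥ v)^2 * (2*(v ⬝ᵥ v)*(r ⬝ᵥ r) - (r ⬝ᵥ v)^2) := by
  set β := r ⬝ᵥ v with hb
  set nv2 := v ⬝ᵥ v with hnv
  set nr2 := r ⬝ᵥ r with hnr
  have expand : ∀ i j : Fin n, (β*(v i*v j) - nv2*(v i*r j) - nv2*(r i*v j))^2 =
      β^2*((v i*v j)*(v i*v j)) - 2*β*nv2*((v i*v j)*(v i*r j))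
      - 2*β*nv2*((v i*v j)*(r i*v j)) + nv2^2*((v i*r j)*(v i*r j))
      + 2*nv2^2*((v i*r j)*(r i*v j)) + nv2^2*((r i*v j)*(r i*v j)) := fun i j => by ring
  simp only [expand]
  simp only [Finset.sum_add_distrib, Finset.sum_sub_distrib, ← Finset.mul_sum]
  rw [sum_prod_form v v v v, sum_prod_form v v v r, sum_prod_form v v r v,
    sum_prod_form v r v r, sum_prod_form v r r v, sum_prod_form r v r v]
  have e1 : ∑ i, v i * v i = nv2 := rfl
  have e2 : ∑ i, v i * r i = β := dotProduct_comm v r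
  have e3 : ∑ i, r i * v i = β := rfl
  have e4 : ∑ i, r i * r i = nr2 := rfl
  rw [e1, e2, e3, e4]
  ring

lemma Amul {n : ℕ} (v r : Fin n → ℝ) :
    (Matrix.of fun i j => (r ⬝ᵥ v)*(v i*v j) - (v ⬝ᵥ v)*(v i*r j) - (v ⬝ᵥ v)*(r i*v j)).mulVec v
      = (-((v ⬝ᵥ v)^2)) • r := by
  funext i
  rw [Matrix.mulVec, dotProduct]
  have expand : ∀ j, Matrix.of (fun i j => (r ⬝ᵥ v)*(v i*v j) - (v ⬝ᵥ v)*(v i*r j) - (v ⬝ᵥ v)*(r i*v j)) i j * v j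
      = ((r ⬝ᵥ v)*v i)*(v j*v j) - ((v ⬝ᵥ v)*v i)*(r j*v j) - ((v ⬝ᵥ v)*r i)*(v j*v j) := by
    intro j; simp only [Matrix.of_apply]; ring
  simp only [expand]
  simp only [Finset.sum_sub_distrib, ← Finset.mul_sum]
  have e1 : ∑ j, v j * v j = v ⬝ᵥ v := rfl
  have e2 : ∑ j, r j * v j = r ⬝ᵥ v := rfl
  rw [e1, e2]
  simp only [Pi.smul_apply, smul_eq_mul]
  ring


/-- for symmetric perturbations measured in the Frobenius norm,
the backward error equals `γ ‖r‖ / ((Σᵢ |fᵢ| wᵢ) ‖ṽ‖)` where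
`γ = sqrt(2 − (rᵀṽ)²/(‖r‖²‖ṽ‖²))`. -/
theorem symmetric_backward_error_frobenius
    {n m : ℕ} (hn : 1 ≤ n) (hm : 1 ≤ m)
    (M : Matrix (Fin n) (Fin n) ℝ)
    (v : Fin n → ℝ) (hv : v ≠ 0) (lam : ℝ)
    (f w : Fin m → ℝ) (hw : ∀ i, 0 ≤ w i)
    (hpos : 0 < ∑ i, |f i| * w i)
    (r : Fin n → ℝ) (hr : r = M.mulVec v - lam • v) (hrne : r ≠ 0) :
    IsLeast
      {t : ℝ | ∃ ε : ℝ, ∃ E : Fin m → Matrix (Fin n) (Fin n) ℝ,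
        (∀ i, (E i)ᵀ = E i) ∧
        (∀ i, frobNorm (E i) ≤ w i) ∧
        (M + ε • ∑ i, f i • E i).mulVec v = lam • v ∧ t = |ε|}
      (Real.sqrt (2 - (r ⬝ᵥ v) ^ 2 / (e2norm r ^ 2 * e2norm v ^ 2)) *
        e2norm r / ((∑ i, |f i| * w i) * e2norm v)) := by
  have hnv2 : 0 < v ⬝ᵥ v := dot_self_pos hv
  have hnr2 : 0 < r ⬝ᵥ r := dot_self_pos hrne
  have hnv : 0 < e2norm v := e2norm_pos hv
  have hnr : 0 < e2norm r := e2norm_pos hrne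
  set β := r ⬝ᵥ v with hβ
  set nv2 := v ⬝ᵥ v with hnv2d
  set nr2 := r ⬝ᵥ r with hnr2d
  set S := ∑ i, |f i| * w i with hS
  -- Cauchy-Schwarz
  have hCS : β ^ 2 ≤ nr2 * nv2 := by
    have h := Finset.sum_mul_sq_le_sq_mul_sq Finset.univ r v
    have e1 : ∑ i, r i * v i = β := rfl
    have e2 : (∑ i, r i ^ 2) = nr2 := Finset.sum_congr rfl fun i _ => sq (r i)
    have e3 : (∑ i, v i ^ 2) = nv2 := Finset.sum_congr rfl fun i _ => sq (v i)
    rwa [e1, e2, e3] at h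
  set D := Real.sqrt (2 * nv2 * nr2 - β ^ 2) with hD
  have hDarg : 0 < 2 * nv2 * nr2 - β ^ 2 := by nlinarith [mul_pos hnr2 hnv2]
  have hDpos : 0 < D := Real.sqrt_pos.mpr hDarg
  -- rewrite the target value
  have hnveq : e2norm v ^ 2 = nv2 := e2norm_sq v
  have hnreq : e2norm r ^ 2 = nr2 := e2norm_sq r
  have harg : (0:ℝ) ≤ 2 - β ^ 2 / (nr2 * nv2) := by
    have := (div_le_one (mul_pos hnr2 hnv2)).mpr hCS
    linarith
  have hprod : Real.sqrt (2 - β ^ 2 / (e2norm r ^ 2 * e2norm v ^ 2)) * e2norm r * e2norm v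
      = D := by
    rw [hnveq, hnreq, e2norm_eq_sqrt_dot, e2norm_eq_sqrt_dot, ← hnv2d, ← hnr2d,
      ← Real.sqrt_mul harg,
      ← Real.sqrt_mul (mul_nonneg harg hnr2.le)]
    rw [hD]
    congr 1
    field_simp
  have hLval : Real.sqrt (2 - β ^ 2 / (e2norm r ^ 2 * e2norm v ^ 2)) * e2norm r
      / (S * e2norm v) = D / (S * nv2) := by
    rw [← hprod]
    rw [show S * nv2 = (S * e2norm v) * e2norm v by
      rw [← hnveq]; ring]
    rw [← mul_div_mul_right (Real.sqrt (2 - β ^ 2 / (e2norm r ^ 2 * e2norm v ^ 2)) * e2norm r)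
      (S * e2norm v) (ne_of_gt hnv)]
  rw [hLval]
  have hSnv2 : 0 < S * nv2 := mul_pos hpos hnv2
  constructor
  · -- membership
    set A : Matrix (Fin n) (Fin n) ℝ :=
      Matrix.of (fun i j => β * (v i * v j) - nv2 * (v i * r j) - nv2 * (r i * v j)) with hA
    have hAT : Aᵀ = A := by
      ext i j
      simp only [hA, Matrix.transpose_apply, Matrix.of_apply]
      ring
    have hAfrob : frobNorm A = nv2 * D := by
      rw [frobNorm]
      have : ∑ i, ∑ j, A i j ^ 2 = nv2 ^ 2 * (2 * nv2 * nr2 - β ^ 2) := Afrob v r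
      rw [this, Real.sqrt_mul (sq_nonneg nv2), Real.sqrt_sq hnv2.le]
    set c : Fin m → ℝ := fun i => Real.sign (f i) * w i / (nv2 * D) with hc
    have hnv2D : (0:ℝ) < nv2 * D := mul_pos hnv2 hDpos
    refine ⟨D / (S * nv2), fun i => c i • A, ?_, ?_, ?_, ?_⟩
    · intro i
      rw [Matrix.transpose_smul, hAT]
    · intro i
      rw [frobNorm_smul, hAfrob, hc]
      have : |Real.sign (f i) * w i / (nv2 * D)| = |Real.sign (f i)| * w i / (nv2 * D) := by
        rw [abs_div, abs_mul, abs_of_nonneg (hw i), abs_of_pos hnv2D]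
      rw [this, div_mul_cancel₀ _ (ne_of_gt hnv2D)]
      exact mul_le_of_le_one_left (hw i) (abs_sign_le_one _)
    · have hsum : (∑ i, f i • (c i • A)) = (S / (nv2 * D)) • A := by
        have : ∀ i, f i • (c i • A) = ((|f i| * w i) / (nv2 * D)) • A := by
          intro i
          rw [smul_smul, hc]
          congr 1
          rw [mul_div_assoc', ← mul_assoc, mul_sign_eq_abs]
        rw [Finset.sum_congr rfl fun i _ => this i, ← Finset.sum_smul, ← Finset.sum_div, hS]
      rw [hsum, Matrix.add_mulVec, smul_smul, Matrix.smul_mulVec]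
      have hAmul : A.mulVec v = (-(nv2 ^ 2)) • r := Amul v r
      rw [hAmul, smul_smul]
      have hco : D / (S * nv2) * (S / (nv2 * D)) * -nv2 ^ 2 = -1 := by
        field_simp
      rw [hco, hr]
      funext i
      simp only [Pi.add_apply, Pi.smul_apply, Pi.sub_apply, smul_eq_mul, neg_mul, one_mul]
      ring
    · rw [abs_of_nonneg (le_of_lt (div_pos hDpos hSnv2))]
  · -- lower bound
    rintro t ⟨ε, E, hsym, hfro, heq, ht⟩
    set Δ := ε • ∑ i, f i • E i with hΔ
    have hΔT : Δᵀ = Δ := by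
      rw [hΔ, Matrix.transpose_smul, Matrix.transpose_sum]
      congr 1
      exact Finset.sum_congr rfl fun i _ => by rw [Matrix.transpose_smul, hsym i]
    have hΔv : Δ.mulVec v = -r := by
      rw [Matrix.add_mulVec] at heq
      have : Δ.mulVec v = lam • v - M.mulVec v := eq_sub_of_add_eq' heq
      rw [this, hr]
      abel
    have hkey := key_ineq Δ hΔT v hnv2
    rw [hΔv] at hkey
    have e1 : (-r) ⬝ᵥ (-r) = nr2 := by rw [neg_dotProduct, dotProduct_neg, neg_neg]
    have e2 : (-r) ⬝ᵥ v = -β := by rw [neg_dotProduct]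
    rw [e1, e2, ← hnv2d] at hkey
    have hkey2 : 2 * nv2 * nr2 - β ^ 2 ≤ (∑ i, ∑ j, Δ i j ^ 2) * nv2 ^ 2 := by nlinarith
    have hfb : frobNorm Δ ≤ |ε| * S := by
      rw [hΔ, frobNorm_smul]
      exact mul_le_mul_of_nonneg_left (frob_sum_le f w E hfro) (abs_nonneg _)
    have hP : (∑ i, ∑ j, Δ i j ^ 2) ≤ (|ε| * S) ^ 2 := by
      rw [← frobNorm_sq]
      exact pow_le_pow_left₀ (frobNorm_nonneg Δ) hfb 2
    have hfinal : 2 * nv2 * nr2 - β ^ 2 ≤ (|ε| * S * nv2) ^ 2 := by nlinarith [sq_nonneg nv2]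
    have hsqrt : D ≤ |ε| * S * nv2 := by
      rw [hD]
      calc Real.sqrt (2 * nv2 * nr2 - β ^ 2) ≤ Real.sqrt ((|ε| * S * nv2) ^ 2) :=
            Real.sqrt_le_sqrt hfinal
        _ = |ε| * S * nv2 := Real.sqrt_sq (by positivity)
    rw [ht, div_le_iff₀ hSnv2]
    calc D ≤ |ε| * S * nv2 := hsqrt
      _ = |ε| * (S * nv2) := by ring
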